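/- Let ã, b̃, C̃, C̃₁ ∈ ℝ with ã ≠ 0 and ã ≠ −1, let I ⊆ ℝ be an open interval, and let f : I → ℝ be twice differentiable with f'(u) ≠ 0 for all u ∈ I, satisfying f(u) = C̃₁·(1+f'(u)²)^{ã/2} − (C̃/(ã+1))·(1+f'(u)²)^{−1/2} − b̃/ã for all u ∈ I. Then f''(u) ≠ 0 and √(1+f'(u)²)·((1+f'(u)²)/f''(u) − ã·f(u) − b̃) = C̃ for all u ∈ I. -/

import Mathlib

open Real Set

/-- Lemma 3.1, converse direction, case ã ∉ {−1, 0}: the explicit solutions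
satisfy the original ODE in first-integral form. -/
theorem stmt_3 (atil btil Ctil C₁ : ℝ) (ha0 : atil ≠ 0) (ha1 : atil ≠ -1)
    (a b : ℝ) (f : ℝ → ℝ)
    (hf1 : ∀ u ∈ Ioo a b, DifferentiableAt ℝ f u)
    (hf2 : ∀ u ∈ Ioo a b, DifferentiableAt ℝ (deriv f) u)
    (hf' : ∀ u ∈ Ioo a b, deriv f u ≠ 0)
    (heq : ∀ u ∈ Ioo a b,
      f u = C₁ * (1 + (deriv f u) ^ 2) ^ (atil / 2)
        - (Ctil / (atil + 1)) * (1 + (deriv f u) ^ 2) ^ (-(1 : ℝ) / 2)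
        - btil / atil) :
    ∀ u ∈ Ioo a b,
      deriv (deriv f) u ≠ 0 ∧
      Real.sqrt (1 + (deriv f u) ^ 2) *
        ((1 + (deriv f u) ^ 2) / deriv (deriv f) u - atil * f u - btil) = Ctil := by
  intro u hu
  set p := deriv f u with hp_def
  set p' := deriv (deriv f) u with hp'_def
  have hp : p ≠ 0 := hf' u hu
  have hq : (0:ℝ) < 1 + p ^ 2 := by positivity
  have hg : HasDerivAt (deriv f) p' u := (hf2 u hu).hasDerivAt
  have hbase : HasDerivAt (fun x => 1 + (deriv f x) ^ 2) (2 * p * p') u := by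
    have h : HasDerivAt (fun x => 1 + (deriv f x) ^ 2) (((2:ℕ):ℝ) * deriv f u ^ (2 - 1) * p') u :=
      (hg.pow 2).const_add (1:ℝ)
    convert h using 1
    ring
  have h1 : HasDerivAt (fun x => (1 + (deriv f x) ^ 2) ^ (atil / 2))
      ((2 * p * p') * (atil / 2) * (1 + p ^ 2) ^ (atil / 2 - 1)) u :=
    hbase.rpow_const (Or.inl hq.ne')
  have h2 : HasDerivAt (fun x => (1 + (deriv f x) ^ 2) ^ (-(1:ℝ) / 2))
      ((2 * p * p') * (-(1:ℝ) / 2) * (1 + p ^ 2) ^ (-(1:ℝ) / 2 - 1)) u :=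
    hbase.rpow_const (Or.inl hq.ne')
  have hRHS : HasDerivAt (fun x => C₁ * (1 + (deriv f x) ^ 2) ^ (atil / 2)
      - (Ctil / (atil + 1)) * (1 + (deriv f x) ^ 2) ^ (-(1:ℝ) / 2) - btil / atil)
      (C₁ * ((2 * p * p') * (atil / 2) * (1 + p ^ 2) ^ (atil / 2 - 1))
        - (Ctil / (atil + 1)) * ((2 * p * p') * (-(1:ℝ) / 2) * (1 + p ^ 2) ^ (-(1:ℝ) / 2 - 1))) u :=
    ((h1.const_mul C₁).sub (h2.const_mul (Ctil / (atil + 1)))).sub_const _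
  have hev : f =ᶠ[nhds u] (fun x => C₁ * (1 + (deriv f x) ^ 2) ^ (atil / 2)
      - (Ctil / (atil + 1)) * (1 + (deriv f x) ^ 2) ^ (-(1:ℝ) / 2) - btil / atil) := by
    filter_upwards [isOpen_Ioo.mem_nhds hu] with x hx
    exact heq x hx
  have hderiv : p = C₁ * ((2 * p * p') * (atil / 2) * (1 + p ^ 2) ^ (atil / 2 - 1))
      - (Ctil / (atil + 1)) * ((2 * p * p') * (-(1:ℝ) / 2) * (1 + p ^ 2) ^ (-(1:ℝ) / 2 - 1)) :=
    hev.deriv_eq.trans hRHS.deriv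
  set A := (1 + p ^ 2) ^ (atil / 2 - 1) with hA_def
  set B := (1 + p ^ 2) ^ (-(1:ℝ) / 2 - 1) with hB_def
  set S := (1 + p ^ 2) ^ (atil / 2) with hS_def
  set T := (1 + p ^ 2) ^ (-(1:ℝ) / 2) with hT_def
  have hAq : A * (1 + p ^ 2) = S := by
    rw [hA_def, hS_def, Real.rpow_sub hq, Real.rpow_one]
    field_simp
  have hBq : B * (1 + p ^ 2) = T := by
    rw [hB_def, hT_def, Real.rpow_sub hq, Real.rpow_one]
    field_simp
  have hkey : p' * (C₁ * atil * A + (Ctil / (atil + 1)) * B) = 1 := by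
    have h : p * (p' * (C₁ * atil * A + (Ctil / (atil + 1)) * B)) = p * 1 := by
      linear_combination -hderiv
    exact mul_left_cancel₀ hp h
  have hp' : p' ≠ 0 := by
    intro h
    rw [h, zero_mul] at hkey
    exact zero_ne_one hkey
  have hqp' : (1 + p ^ 2) / p' = C₁ * atil * S + (Ctil / (atil + 1)) * T := by
    rw [div_eq_iff hp', ← hAq, ← hBq]
    linear_combination (-(1 + p ^ 2)) * hkey
  have hfu : f u = C₁ * S - (Ctil / (atil + 1)) * T - btil / atil := heq u hu
  have ha1' : atil + 1 ≠ 0 := by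
    intro h; apply ha1; linarith
  have hmain : (1 + p ^ 2) / p' - atil * f u - btil = Ctil * T := by
    rw [hqp', hfu]
    field_simp
    ring
  have hsqT : Real.sqrt (1 + p ^ 2) * T = 1 := by
    rw [hT_def, Real.sqrt_eq_rpow, ← Real.rpow_add hq]
    norm_num
  refine ⟨hp', ?_⟩
  rw [hmain]
  calc Real.sqrt (1 + p ^ 2) * (Ctil * T) = Ctil * (Real.sqrt (1 + p ^ 2) * T) := by ring
    _ = Ctil := by rw [hsqT, mul_one]
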